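/- Let D ≥ 3 and let π^{aIJ} : ℝ^{D} → ℝ (a ∈ {1,…,D}, I, J ∈ {1,…,D+1}) be continuous functions antisymmetric in I, J. For x ∈ ℝ^{D}, a continuously differentiable map S : (−1/2,1/2)^{D−1} → ℝ^{D} with S(0) = x, fixed I, J, and ε > 0, define the flux π^{IJ}(S_ε) := ∫_{(−ε/2,ε/2)^{D−1}} Σ ε_{a a₁…a_{D−1}} (∂S^{a₁}/∂u₁)(u) ⋯ (∂S^{a_{D−1}}/∂u_{D−1})(u) π^{aIJ}(S(u)) du. Then the following are equivalent: (i) for all x ∈ ℝ^{D}, all a, b ∈ {1,…,D} and all tuples M₁ < ⋯ < M_{D−3} in {1,…,D+1}: Σ_{I,J,K,L} ε_{I J K L M₁…M_{D−3}} π^{aIJ}(x) π^{bKL}(x) = 0; (ii) for all x, all tuples M₁ < ⋯ < M_{D−3}, and all pairs S, S' of continuously differentiable surfaces as above with S(0) = S'(0) = x: lim_{ε, ε' → 0⁺} ε^{1−D} ε'^{1−D} Σ_{I,J,K,L} ε_{I J K L M₁…M_{D−3}} π^{IJ}(S_ε) π^{KL}(S'_{ε'}) = 0. -/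

import Mathlib

open MeasureTheory Filter

/-- The Levi-Civita symbol `ε_{f(1) … f(n)}` on `n` indices: the sign of the permutation
`(f(1),…,f(n))` of `(1,…,n)`, and `0` if any two indices coincide. -/
noncomputable def eps {n : ℕ} (f : Fin n → Fin n) : ℤ :=
  if h : Function.Bijective f then (Equiv.Perm.sign (Equiv.ofBijective f h) : ℤ) else 0

/-- The combined internal index tuple `(I, J, K, L, M₁, …, M_d)` (with `d + 4` slots). -/
def idx {d : ℕ} (I J K L : Fin (d + 4)) (M : Fin d → Fin (d + 4)) :
    Fin (d + 4) → Fin (d + 4) := fun i =>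
  if h : (i : ℕ) < 4 then ![I, J, K, L] ⟨(i : ℕ), h⟩
  else M ⟨(i : ℕ) - 4, by have := i.isLt; omega⟩

/-- The parameter cube `(−1/2, 1/2)^{D−1}` (with `D = d + 3`). -/
def cube (d : ℕ) : Set (Fin (d + 2) → ℝ) :=
  Set.univ.pi fun _ : Fin (d + 2) => Set.Ioo (-(1 / 2) : ℝ) (1 / 2)

/-- The electric flux `π^{IJ}(S_ε)` of the field `π^{aIJ}` through the surface
`S : (−1/2,1/2)^{D−1} → ℝ^D` (with derivative field `dS`) shrunk by `ε`,
`π^{IJ}(S_ε) = ∫_{(−ε/2,ε/2)^{D−1}} Σ ε_{a a₁…a_{D−1}} ∂₁S^{a₁} ⋯ ∂_{D−1}S^{a_{D−1}}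
π^{aIJ}(S(u)) du`, where `D = d + 3`. -/
noncomputable def flux (d : ℕ)
    (π : Fin (d + 3) → Fin (d + 4) → Fin (d + 4) → (Fin (d + 3) → ℝ) → ℝ)
    (S : (Fin (d + 2) → ℝ) → Fin (d + 3) → ℝ)
    (dS : (Fin (d + 2) → ℝ) → ((Fin (d + 2) → ℝ) →L[ℝ] (Fin (d + 3) → ℝ)))
    (I J : Fin (d + 4)) (ε : ℝ) : ℝ :=
  ∫ u in Set.univ.pi fun _ : Fin (d + 2) => Set.Ioo (-(ε / 2)) (ε / 2),
    ∑ a : Fin (d + 3), ∑ g : Fin (d + 2) → Fin (d + 3),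
      (eps (Fin.cons a g) : ℝ) * (∏ i : Fin (d + 2), dS u (Pi.single i 1) (g i)) *
        π a I J (S u)

section Aux

open Set

/-- Averages of a continuous function over shrinking cubes tend to the value at `0`. -/
lemma avg_tendsto {n : ℕ} (f : (Fin n → ℝ) → ℝ)
    (hf : ContinuousOn f (Set.univ.pi fun _ : Fin n => Set.Ioo (-(1/2) : ℝ) (1/2))) :
    Tendsto (fun ε : ℝ => (1 / ε ^ n) *
        ∫ u in Set.univ.pi fun _ : Fin n => Set.Ioo (-(ε/2)) (ε/2), f u)
      (nhdsWithin 0 (Set.Ioi 0)) (nhds (f 0)) := by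
  set U : Set (Fin n → ℝ) := Set.univ.pi fun _ : Fin n => Set.Ioo (-(1/2) : ℝ) (1/2) with hU
  have h0U : (0 : Fin n → ℝ) ∈ U := by
    intro i _; constructor <;> norm_num
  have hsub : ∀ {ε : ℝ}, 0 < ε → ε < 1 →
      (Set.univ.pi fun _ : Fin n => Set.Icc (-(ε/2)) (ε/2)) ⊆ U := by
    intro ε hε hε1 u hu i _
    have := hu i (mem_univ i)
    constructor <;> [nlinarith [this.1]; nlinarith [this.2]]
  have hIooIcc : ∀ {ε : ℝ},
      (Set.univ.pi fun _ : Fin n => Set.Ioo (-(ε/2)) (ε/2)) ⊆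
      (Set.univ.pi fun _ : Fin n => Set.Icc (-(ε/2)) (ε/2)) := by
    intro ε u hu i _
    exact Ioo_subset_Icc_self (hu i (mem_univ i))
  have hvol : ∀ {ε : ℝ}, 0 ≤ ε →
      volume (Set.univ.pi fun _ : Fin n => Set.Ioo (-(ε/2)) (ε/2)) = ENNReal.ofReal ε ^ n := by
    intro ε hε
    rw [volume_pi_pi]
    simp [Real.volume_Ioo]
  have hint : ∀ {ε : ℝ}, 0 < ε → ε < 1 →
      IntegrableOn f (Set.univ.pi fun _ : Fin n => Set.Ioo (-(ε/2)) (ε/2)) := by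
    intro ε hε hε1
    refine IntegrableOn.mono_set ?_ hIooIcc
    exact (hf.mono (hsub hε hε1)).integrableOn_compact
      (isCompact_univ_pi fun _ => isCompact_Icc)
  rw [Metric.tendsto_nhdsWithin_nhds]
  intro δ hδ
  have hc : ContinuousWithinAt f U 0 := hf 0 h0U
  rw [Metric.continuousWithinAt_iff] at hc
  obtain ⟨r, hr, hrc⟩ := hc (δ/2) (by positivity)
  refine ⟨min r 1, by positivity, ?_⟩
  intro ε hε hεd
  have hε0 : 0 < ε := hε
  have hεlt : ε < min r 1 := by
    rwa [Real.dist_eq, sub_zero, abs_of_pos hε0] at hεd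
  have hε1 : ε < 1 := lt_of_lt_of_le hεlt (min_le_right _ _)
  have hεr : ε < r := lt_of_lt_of_le hεlt (min_le_left _ _)
  set s : Set (Fin n → ℝ) := Set.univ.pi fun _ : Fin n => Set.Ioo (-(ε/2)) (ε/2) with hs
  have hsU : s ⊆ U := fun u hu => hsub hε0 hε1 (hIooIcc hu)
  have hvols : volume s = ENNReal.ofReal ε ^ n := hvol hε0.le
  have hvolr : (volume s).toReal = ε ^ n := by
    rw [hvols, ← ENNReal.ofReal_pow hε0.le, ENNReal.toReal_ofReal (by positivity)]
  have hεn : (0:ℝ) < ε ^ n := by positivity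
  have hbd : ∀ u ∈ s, ‖f u - f 0‖ ≤ δ/2 := by
    intro u hu
    have huU : u ∈ U := hsU hu
    have hdist : dist u 0 < r := by
      rw [dist_pi_lt_iff hr]
      intro i
      have := hu i (mem_univ i)
      rw [Real.dist_eq]
      simp only [Pi.zero_apply, sub_zero]
      rw [abs_lt]
      constructor <;> [nlinarith [this.1]; nlinarith [this.2]]
    exact (hrc huU hdist).le
  have hvolfin : volume s < ⊤ := by
    rw [hvols]; exact ENNReal.pow_lt_top ENNReal.ofReal_lt_top
  have hints : IntegrableOn f s := hint hε0 hε1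
  have hconst : IntegrableOn (fun _ => f 0) s := integrableOn_const hvolfin.ne
  have hints0 : IntegrableOn (fun u => f u - f 0) s := hints.sub hconst
  have hnorm : ‖∫ u in s, (f u - f 0)‖ ≤ (δ/2) * (volume s).toReal :=
    by have := norm_setIntegral_le_of_norm_le_const hvolfin hbd; exact this
  have hintdecomp : (∫ u in s, f u) = (∫ u in s, (f u - f 0)) + f 0 * ε ^ n := by
    have h2 := integral_sub hints hconst
    rw [setIntegral_const, show volume.real s = (volume s).toReal from rfl, hvolr, smul_eq_mul] at h2
    rw [h2]; ring
  have key : (1 / ε ^ n) * (∫ u in s, f u) - f 0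
      = (1 / ε ^ n) * (∫ u in s, (f u - f 0)) := by
    rw [hintdecomp]; field_simp; ring
  rw [Real.dist_eq, key]
  calc |(1 / ε ^ n) * ∫ u in s, (f u - f 0)|
      = (1 / ε ^ n) * ‖∫ u in s, (f u - f 0)‖ := by
        rw [abs_mul, abs_of_pos (show (0:ℝ) < 1 / ε ^ n by positivity), Real.norm_eq_abs]
    _ ≤ (1 / ε ^ n) * ((δ/2) * (volume s).toReal) :=
        mul_le_mul_of_nonneg_left hnorm (by positivity)
    _ = δ/2 := by rw [hvolr]; field_simp
    _ < δ := by linarith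

/-- The limit of the rescaled flux as the surface shrinks. -/
noncomputable def Gq (d : ℕ)
    (π : Fin (d + 3) → Fin (d + 4) → Fin (d + 4) → (Fin (d + 3) → ℝ) → ℝ)
    (S : (Fin (d + 2) → ℝ) → Fin (d + 3) → ℝ)
    (dS : (Fin (d + 2) → ℝ) → ((Fin (d + 2) → ℝ) →L[ℝ] (Fin (d + 3) → ℝ)))
    (I J : Fin (d + 4)) : ℝ :=
  ∑ a : Fin (d + 3), ∑ g : Fin (d + 2) → Fin (d + 3),
    (eps (Fin.cons a g) : ℝ) * (∏ i : Fin (d + 2), dS 0 (Pi.single i 1) (g i)) *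
      π a I J (S 0)

lemma flux_tendsto (d : ℕ)
    (π : Fin (d + 3) → Fin (d + 4) → Fin (d + 4) → (Fin (d + 3) → ℝ) → ℝ)
    (hcont : ∀ a I J, Continuous (π a I J))
    (S : (Fin (d + 2) → ℝ) → Fin (d + 3) → ℝ)
    (dS : (Fin (d + 2) → ℝ) → ((Fin (d + 2) → ℝ) →L[ℝ] (Fin (d + 3) → ℝ)))
    (hS : ∀ u ∈ cube d, HasFDerivAt S (dS u) u) (hdS : ContinuousOn dS (cube d))
    (I J : Fin (d + 4)) :
    Tendsto (fun ε : ℝ => (1 / ε ^ (d + 2)) * flux d π S dS I J ε)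
      (nhdsWithin 0 (Set.Ioi 0)) (nhds (Gq d π S dS I J)) := by
  have hScont : ContinuousOn S (cube d) := fun u hu => ((hS u hu).continuousAt).continuousWithinAt
  have hf : ContinuousOn (fun u => ∑ a : Fin (d + 3), ∑ g : Fin (d + 2) → Fin (d + 3),
      (eps (Fin.cons a g) : ℝ) * (∏ i : Fin (d + 2), dS u (Pi.single i 1) (g i)) *
        π a I J (S u)) (cube d) := by
    apply continuousOn_finset_sum
    intro a _
    apply continuousOn_finset_sum
    intro g _
    apply ContinuousOn.mul
    · apply ContinuousOn.mul continuousOn_const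
      apply continuousOn_finset_prod
      intro i _
      exact ((continuous_apply (g i)).comp
        (ContinuousLinearMap.apply ℝ (Fin (d+3) → ℝ) (Pi.single i (1:ℝ))).continuous).comp_continuousOn hdS
    · exact (hcont a I J).comp_continuousOn hScont
  exact avg_tendsto _ hf

lemma combined_tendsto (d : ℕ)
    (π : Fin (d + 3) → Fin (d + 4) → Fin (d + 4) → (Fin (d + 3) → ℝ) → ℝ)
    (hcont : ∀ a I J, Continuous (π a I J))
    (M : Fin d → Fin (d + 4))
    (S S' : (Fin (d + 2) → ℝ) → Fin (d + 3) → ℝ)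
    (dS dS' : (Fin (d + 2) → ℝ) → ((Fin (d + 2) → ℝ) →L[ℝ] (Fin (d + 3) → ℝ)))
    (hS : ∀ u ∈ cube d, HasFDerivAt S (dS u) u) (hdS : ContinuousOn dS (cube d))
    (hS' : ∀ u ∈ cube d, HasFDerivAt S' (dS' u) u) (hdS' : ContinuousOn dS' (cube d)) :
    Tendsto (fun p : ℝ × ℝ =>
        (1 / (p.1 ^ (d + 2) * p.2 ^ (d + 2))) *
          ∑ I : Fin (d + 4), ∑ J : Fin (d + 4), ∑ K : Fin (d + 4), ∑ L : Fin (d + 4),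
            (eps (idx I J K L M) : ℝ) *
              (flux d π S dS I J p.1 * flux d π S' dS' K L p.2))
      ((nhdsWithin 0 (Set.Ioi 0)) ×ˢ (nhdsWithin 0 (Set.Ioi 0)))
      (nhds (∑ I : Fin (d + 4), ∑ J : Fin (d + 4), ∑ K : Fin (d + 4), ∑ L : Fin (d + 4),
        (eps (idx I J K L M) : ℝ) * (Gq d π S dS I J * Gq d π S' dS' K L))) := by
  have h1 := flux_tendsto d π hcont S dS hS hdS
  have h2 := flux_tendsto d π hcont S' dS' hS' hdS'
  have hmain : Tendsto (fun p : ℝ × ℝ =>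
      ∑ I : Fin (d + 4), ∑ J : Fin (d + 4), ∑ K : Fin (d + 4), ∑ L : Fin (d + 4),
        (eps (idx I J K L M) : ℝ) *
          (((1 / p.1 ^ (d + 2)) * flux d π S dS I J p.1) *
           ((1 / p.2 ^ (d + 2)) * flux d π S' dS' K L p.2)))
      ((nhdsWithin 0 (Set.Ioi 0)) ×ˢ (nhdsWithin 0 (Set.Ioi 0)))
      (nhds (∑ I : Fin (d + 4), ∑ J : Fin (d + 4), ∑ K : Fin (d + 4), ∑ L : Fin (d + 4),
        (eps (idx I J K L M) : ℝ) * (Gq d π S dS I J * Gq d π S' dS' K L))) := by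
    refine tendsto_finset_sum _ fun I _ => tendsto_finset_sum _ fun J _ =>
      tendsto_finset_sum _ fun K _ => tendsto_finset_sum _ fun L _ => ?_
    exact (((h1 I J).comp tendsto_fst).mul ((h2 K L).comp tendsto_snd)).const_mul _
  have hev : (Set.Ioi (0:ℝ) ×ˢ Set.Ioi (0:ℝ)) ∈
      ((nhdsWithin (0:ℝ) (Set.Ioi 0)) ×ˢ (nhdsWithin (0:ℝ) (Set.Ioi 0))) :=
    Filter.prod_mem_prod self_mem_nhdsWithin self_mem_nhdsWithin
  refine Tendsto.congr' ?_ hmain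
  filter_upwards [hev] with p hp
  obtain ⟨hx, hy⟩ := hp
  have hxn : p.1 ^ (d + 2) ≠ 0 := pow_ne_zero _ (ne_of_gt hx)
  have hyn : p.2 ^ (d + 2) ≠ 0 := pow_ne_zero _ (ne_of_gt hy)
  rw [Finset.mul_sum]
  refine Finset.sum_congr rfl fun I _ => ?_
  rw [Finset.mul_sum]
  refine Finset.sum_congr rfl fun J _ => ?_
  rw [Finset.mul_sum]
  refine Finset.sum_congr rfl fun K _ => ?_
  rw [Finset.mul_sum]
  refine Finset.sum_congr rfl fun L _ => ?_
  field_simp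

lemma quad_sum_rearrange {α β : Type*} [Fintype α] [Fintype β]
    (e : α → α → α → α → ℝ) (c c' : β → ℝ) (p q : β → α → α → ℝ) :
    ∑ I : α, ∑ J : α, ∑ K : α, ∑ L : α, e I J K L *
        ((∑ a : β, c a * p a I J) * (∑ b : β, c' b * q b K L))
    = ∑ a : β, ∑ b : β, (c a * c' b) *
        ∑ I : α, ∑ J : α, ∑ K : α, ∑ L : α, e I J K L * (p a I J * q b K L) := by
  have key : ∀ (F : α → α → α → α → (β × β) → ℝ),
      ∑ I, ∑ J, ∑ K, ∑ L, ∑ t : β × β, F I J K L t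
      = ∑ t : β × β, ∑ I, ∑ J, ∑ K, ∑ L, F I J K L t := by
    intro F
    calc ∑ I, ∑ J, ∑ K, ∑ L, ∑ t : β × β, F I J K L t
        = ∑ I, ∑ J, ∑ K, ∑ t : β × β, ∑ L, F I J K L t :=
          Finset.sum_congr rfl fun I _ => Finset.sum_congr rfl fun J _ =>
            Finset.sum_congr rfl fun K _ => Finset.sum_comm
      _ = ∑ I, ∑ J, ∑ t : β × β, ∑ K, ∑ L, F I J K L t :=
          Finset.sum_congr rfl fun I _ => Finset.sum_congr rfl fun J _ => Finset.sum_comm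
      _ = ∑ I, ∑ t : β × β, ∑ J, ∑ K, ∑ L, F I J K L t :=
          Finset.sum_congr rfl fun I _ => Finset.sum_comm
      _ = ∑ t : β × β, ∑ I, ∑ J, ∑ K, ∑ L, F I J K L t := Finset.sum_comm
  calc ∑ I, ∑ J, ∑ K, ∑ L, e I J K L *
          ((∑ a : β, c a * p a I J) * (∑ b : β, c' b * q b K L))
      = ∑ I, ∑ J, ∑ K, ∑ L, ∑ t : β × β,
          e I J K L * ((c t.1 * p t.1 I J) * (c' t.2 * q t.2 K L)) := by
        refine Finset.sum_congr rfl fun I _ => Finset.sum_congr rfl fun J _ =>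
          Finset.sum_congr rfl fun K _ => Finset.sum_congr rfl fun L _ => ?_
        rw [Finset.sum_mul_sum]
        simp only [Finset.mul_sum]
        exact (Fintype.sum_prod_type fun t : β × β =>
          e I J K L * (c t.1 * p t.1 I J * (c' t.2 * q t.2 K L))).symm
    _ = ∑ t : β × β, ∑ I, ∑ J, ∑ K, ∑ L,
          e I J K L * ((c t.1 * p t.1 I J) * (c' t.2 * q t.2 K L)) := key _
    _ = ∑ t : β × β, (c t.1 * c' t.2) *
          ∑ I, ∑ J, ∑ K, ∑ L, e I J K L * (p t.1 I J * q t.2 K L) := by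
        refine Finset.sum_congr rfl fun t _ => ?_
        simp only [Finset.mul_sum]
        refine Finset.sum_congr rfl fun I _ => Finset.sum_congr rfl fun J _ =>
          Finset.sum_congr rfl fun K _ => Finset.sum_congr rfl fun L _ => by ring
    _ = ∑ a : β, ∑ b : β, (c a * c' b) *
          ∑ I, ∑ J, ∑ K, ∑ L, e I J K L * (p a I J * q b K L) :=
        Fintype.sum_prod_type fun t : β × β => (c t.1 * c' t.2) *
          ∑ I, ∑ J, ∑ K, ∑ L, e I J K L * (p t.1 I J * q t.2 K L)

lemma eps_cons_succAbove_ne (d : ℕ) (a : Fin (d + 3)) :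
    eps (Fin.cons a a.succAbove) ≠ 0 := by
  have hinj : Function.Injective (Fin.cons a a.succAbove : Fin (d + 3) → Fin (d + 3)) := by
    intro i j h
    rcases Fin.eq_zero_or_eq_succ i with rfl | ⟨i', rfl⟩ <;>
      rcases Fin.eq_zero_or_eq_succ j with rfl | ⟨j', rfl⟩
    · rfl
    · rw [Fin.cons_zero, Fin.cons_succ] at h
      exact absurd h.symm (Fin.succAbove_ne a j')
    · rw [Fin.cons_zero, Fin.cons_succ] at h
      exact absurd h (Fin.succAbove_ne a i')
    · rw [Fin.cons_succ, Fin.cons_succ] at h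
      exact congrArg Fin.succ (Fin.succAbove_right_injective h)
  have hbij := Finite.injective_iff_bijective.mp hinj
  rw [eps, dif_pos hbij]
  exact Units.ne_zero _

lemma eps_cons_succAbove_zero (d : ℕ) (a a' : Fin (d + 3)) (h : a' ≠ a) :
    eps (Fin.cons a' a.succAbove) = 0 := by
  obtain ⟨i, hi⟩ := Fin.exists_succAbove_eq h
  have : ¬ Function.Bijective (Fin.cons a' a.succAbove : Fin (d + 3) → Fin (d + 3)) := by
    intro hb
    have h0 : (Fin.cons a' a.succAbove : Fin (d + 3) → Fin (d + 3)) 0 = a' := rfl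
    have h1 : (Fin.cons a' a.succAbove : Fin (d + 3) → Fin (d + 3)) i.succ = a' := by
      rw [Fin.cons_succ, hi]
    exact (Fin.succ_ne_zero i) (hb.injective (h1.trans h0.symm))
  rw [eps, dif_neg this]

/-- The linear surface direction map picking the coordinate plane missing `a`. -/
noncomputable def lmap (d : ℕ) (a : Fin (d + 3)) :
    (Fin (d + 2) → ℝ) →L[ℝ] (Fin (d + 3) → ℝ) :=
  LinearMap.toContinuousLinearMap
    (Matrix.mulVecLin (Matrix.of fun j (i : Fin (d + 2)) => if a.succAbove i = j then (1:ℝ) else 0))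

lemma lmap_single (d : ℕ) (a : Fin (d + 3)) (i : Fin (d + 2)) (j : Fin (d + 3)) :
    lmap d a (Pi.single i 1) j = if a.succAbove i = j then (1:ℝ) else 0 := by
  simp only [lmap, LinearMap.coe_toContinuousLinearMap', Matrix.mulVecLin_apply,
    Matrix.mulVec, dotProduct, Matrix.of_apply, Pi.single_apply, mul_ite, mul_one, mul_zero]
  simp

/-- `Gq` for the flat surface through `x` spanned by the directions missing `a`. -/
lemma Gq_lmap (d : ℕ)
    (π : Fin (d + 3) → Fin (d + 4) → Fin (d + 4) → (Fin (d + 3) → ℝ) → ℝ)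
    (x : Fin (d + 3) → ℝ) (a : Fin (d + 3)) (I J : Fin (d + 4)) :
    Gq d π (fun u => x + lmap d a u) (fun _ => lmap d a) I J
      = (eps (Fin.cons a a.succAbove) : ℝ) * π a I J x := by
  have hS0 : x + lmap d a 0 = x := by rw [map_zero, add_zero]
  have hprod : ∀ g : Fin (d + 2) → Fin (d + 3),
      (∏ i : Fin (d + 2), lmap d a (Pi.single i 1) (g i))
        = if g = a.succAbove then 1 else 0 := by
    intro g
    by_cases h : g = a.succAbove
    · subst h; simp [lmap_single]
    · rw [if_neg h]
      obtain ⟨i, hi⟩ := Function.ne_iff.mp h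
      refine Finset.prod_eq_zero (Finset.mem_univ i) ?_
      rw [lmap_single, if_neg (fun hh => hi hh.symm)]
  unfold Gq
  simp only [map_zero, add_zero]
  have hinner : ∀ a' : Fin (d + 3),
      (∑ g : Fin (d + 2) → Fin (d + 3), (eps (Fin.cons a' g) : ℝ) *
          (∏ i : Fin (d + 2), lmap d a (Pi.single i 1) (g i)) * π a' I J x)
        = (eps (Fin.cons a' a.succAbove) : ℝ) * π a' I J x := by
    intro a'
    rw [Finset.sum_eq_single a.succAbove]
    · rw [hprod, if_pos rfl, mul_one]
    · intro g _ hg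
      rw [hprod, if_neg hg, mul_zero, zero_mul]
    · intro h; exact absurd (Finset.mem_univ _) h
  rw [Finset.sum_congr rfl fun a' _ => hinner a']
  rw [Finset.sum_eq_single a]
  · intro a' _ ha'
    rw [eps_cons_succAbove_zero d a a' ha', Int.cast_zero, zero_mul]
  · intro h; exact absurd (Finset.mem_univ _) h

end Aux

/-- Let `D = d + 3 ≥ 3` and let `π^{aIJ}` be continuous fields on `ℝ^D`, antisymmetric
in the internal indices. Then the pointwise quadratic simplicity constraint
`Σ ε_{IJKLM₁…M_{D−3}} π^{aIJ}(x) π^{bKL}(x) = 0` (for all `x`, all `a, b` and all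
increasing tuples `M₁ < ⋯ < M_{D−3}`) holds if and only if its smeared version holds:
for all `x`, all increasing tuples and all pairs of continuously differentiable surfaces
`S, S'` through `x`, the rescaled contraction of fluxes
`ε^{1−D} ε'^{1−D} Σ ε_{IJKLM̄} π^{IJ}(S_ε) π^{KL}(S'_{ε'})` tends to `0` as
`ε, ε' → 0⁺`. -/
theorem simplicity_pointwise_iff_flux (d : ℕ)
    (π : Fin (d + 3) → Fin (d + 4) → Fin (d + 4) → (Fin (d + 3) → ℝ) → ℝ)
    (hcont : ∀ a I J, Continuous (π a I J))
    (hanti : ∀ a I J x, π a J I x = - π a I J x) :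
    (∀ x : Fin (d + 3) → ℝ, ∀ a b : Fin (d + 3),
      ∀ M : Fin d → Fin (d + 4), StrictMono M →
        ∑ I : Fin (d + 4), ∑ J : Fin (d + 4), ∑ K : Fin (d + 4), ∑ L : Fin (d + 4),
          (eps (idx I J K L M) : ℝ) * (π a I J x * π b K L x) = 0)
    ↔
    (∀ x : Fin (d + 3) → ℝ, ∀ M : Fin d → Fin (d + 4), StrictMono M →
      ∀ (S S' : (Fin (d + 2) → ℝ) → Fin (d + 3) → ℝ)
        (dS dS' : (Fin (d + 2) → ℝ) → ((Fin (d + 2) → ℝ) →L[ℝ] (Fin (d + 3) → ℝ))),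
        S 0 = x → S' 0 = x →
        (∀ u ∈ cube d, HasFDerivAt S (dS u) u) → ContinuousOn dS (cube d) →
        (∀ u ∈ cube d, HasFDerivAt S' (dS' u) u) → ContinuousOn dS' (cube d) →
        Tendsto (fun p : ℝ × ℝ =>
            (1 / (p.1 ^ (d + 2) * p.2 ^ (d + 2))) *
              ∑ I : Fin (d + 4), ∑ J : Fin (d + 4), ∑ K : Fin (d + 4), ∑ L : Fin (d + 4),
                (eps (idx I J K L M) : ℝ) *
                  (flux d π S dS I J p.1 * flux d π S' dS' K L p.2))
          ((nhdsWithin 0 (Set.Ioi 0)) ×ˢ (nhdsWithin 0 (Set.Ioi 0)))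
          (nhds 0)) := by
  constructor
  · -- pointwise ⟹ smeared
    intro hpt x M hM S S' dS dS' hS0 hS'0 hS hdS hS' hdS'
    have hlim := combined_tendsto d π hcont M S S' dS dS' hS hdS hS' hdS'
    have hG : ∀ I J, Gq d π S dS I J
        = ∑ a : Fin (d + 3), (∑ g : Fin (d + 2) → Fin (d + 3),
            (eps (Fin.cons a g) : ℝ) * ∏ i : Fin (d + 2), dS 0 (Pi.single i 1) (g i))
          * π a I J x := by
      intro I J
      unfold Gq
      rw [hS0]
      exact Finset.sum_congr rfl fun a _ => (Finset.sum_mul _ _ _).symm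
    have hG' : ∀ K L, Gq d π S' dS' K L
        = ∑ b : Fin (d + 3), (∑ g : Fin (d + 2) → Fin (d + 3),
            (eps (Fin.cons b g) : ℝ) * ∏ i : Fin (d + 2), dS' 0 (Pi.single i 1) (g i))
          * π b K L x := by
      intro K L
      unfold Gq
      rw [hS'0]
      exact Finset.sum_congr rfl fun b _ => (Finset.sum_mul _ _ _).symm
    have hQ : (∑ I : Fin (d + 4), ∑ J : Fin (d + 4), ∑ K : Fin (d + 4), ∑ L : Fin (d + 4),
        (eps (idx I J K L M) : ℝ) * (Gq d π S dS I J * Gq d π S' dS' K L)) = 0 := by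
      rw [Finset.sum_congr rfl fun I _ => Finset.sum_congr rfl fun J _ =>
        Finset.sum_congr rfl fun K _ => Finset.sum_congr rfl fun L _ => by
          rw [hG I J, hG' K L]]
      rw [quad_sum_rearrange]
      refine Finset.sum_eq_zero fun a _ => Finset.sum_eq_zero fun b _ => ?_
      rw [hpt x a b M hM, mul_zero]
    exact hQ ▸ hlim
  · -- smeared ⟹ pointwise
    intro hflux x a b M hM
    have hSda : ∀ u ∈ cube d, HasFDerivAt (fun u => x + lmap d a u) (lmap d a) u :=
      fun u _ => (lmap d a).hasFDerivAt.const_add x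
    have hSdb : ∀ u ∈ cube d, HasFDerivAt (fun u => x + lmap d b u) (lmap d b) u :=
      fun u _ => (lmap d b).hasFDerivAt.const_add x
    have hS0a : (fun u => x + lmap d a u) 0 = x := by simp
    have hS0b : (fun u => x + lmap d b u) 0 = x := by simp
    have hlim := combined_tendsto d π hcont M
      (fun u => x + lmap d a u) (fun u => x + lmap d b u)
      (fun _ => lmap d a) (fun _ => lmap d b)
      hSda continuousOn_const hSdb continuousOn_const
    have hgiven := hflux x M hM
      (fun u => x + lmap d a u) (fun u => x + lmap d b u)
      (fun _ => lmap d a) (fun _ => lmap d b)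
      hS0a hS0b hSda continuousOn_const hSdb continuousOn_const
    haveI : ((nhdsWithin (0:ℝ) (Set.Ioi 0)) ×ˢ (nhdsWithin (0:ℝ) (Set.Ioi 0))).NeBot :=
      Filter.prod_neBot.mpr ⟨nhdsGT_neBot 0, nhdsGT_neBot 0⟩
    have hQ0 := tendsto_nhds_unique hlim hgiven
    set sa : ℝ := (eps (Fin.cons a a.succAbove) : ℝ) with hsadef
    set sb : ℝ := (eps (Fin.cons b b.succAbove) : ℝ) with hsbdef
    rw [Finset.sum_congr rfl fun I _ => Finset.sum_congr rfl fun J _ =>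
      Finset.sum_congr rfl fun K _ => Finset.sum_congr rfl fun L _ => by
        rw [Gq_lmap d π x a I J, Gq_lmap d π x b K L]] at hQ0
    have hfactor : (∑ I : Fin (d + 4), ∑ J : Fin (d + 4), ∑ K : Fin (d + 4), ∑ L : Fin (d + 4),
        (eps (idx I J K L M) : ℝ) * ((sa * π a I J x) * (sb * π b K L x)))
        = (sa * sb) * ∑ I : Fin (d + 4), ∑ J : Fin (d + 4), ∑ K : Fin (d + 4), ∑ L : Fin (d + 4),
            (eps (idx I J K L M) : ℝ) * (π a I J x * π b K L x) := by
      simp only [Finset.mul_sum]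
      refine Finset.sum_congr rfl fun I _ => Finset.sum_congr rfl fun J _ =>
        Finset.sum_congr rfl fun K _ => Finset.sum_congr rfl fun L _ => by ring
    rw [hfactor] at hQ0
    have hsa : sa ≠ 0 := Int.cast_ne_zero.mpr (eps_cons_succAbove_ne d a)
    have hsb : sb ≠ 0 := Int.cast_ne_zero.mpr (eps_cons_succAbove_ne d b)
    exact (mul_eq_zero.mp hQ0).resolve_left (mul_ne_zero hsa hsb)
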